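/- arXiv:1209.5575 — 2 statements merged into one kernel-verified Lean document; each statement's English description precedes it below -/
import Mathlib

section
/- If A, B ⊆ ℤ satisfy BD(A) + BD(B) > 1, then A − B is thick. -/
open Filter Set Pointwise

/-- `maxCount A n` = max over `x ∈ ℤ` of `|A ∩ [x+1, x+n]|`. -/
noncomputable def maxCount (A : Set ℤ) (n : ℕ) : ℕ :=
  sSup {c : ℕ | ∃ x : ℤ, c = (A ∩ Set.Icc (x + 1) (x + n)).ncard}

/-- Upper Banach density of a set of integers. -/
noncomputable def BD (A : Set ℤ) : ℝ :=
  ⨅ n : ℕ+, (maxCount A (n : ℕ) : ℝ) / (n : ℕ)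

def Thick (A : Set ℤ) : Prop :=
  ∀ k : ℕ, ∃ y : ℤ, Set.Icc (y + 1) (y + k) ⊆ A

def Syndetic (A : Set ℤ) : Prop :=
  ∃ k : ℕ, ∀ x : ℤ, (A ∩ Set.Icc (x + 1) (x + k)).Nonempty

lemma ncard_Icc_int (a b : ℤ) : (Set.Icc a b).ncard = (b + 1 - a).toNat := by
  rw [← Finset.coe_Icc, Set.ncard_coe_finset, Int.card_Icc]

lemma inter_Icc_ncard_le (A : Set ℤ) (x : ℤ) (n : ℕ) :
    (A ∩ Set.Icc (x + 1) (x + n)).ncard ≤ n := by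
  calc (A ∩ Set.Icc (x + 1) (x + n)).ncard ≤ (Set.Icc (x + 1) (x + (n : ℤ))).ncard :=
        Set.ncard_le_ncard inter_subset_right (Set.finite_Icc _ _)
    _ = n := by rw [ncard_Icc_int]; omega

lemma maxCount_bddAbove (A : Set ℤ) (n : ℕ) :
    BddAbove {c : ℕ | ∃ x : ℤ, c = (A ∩ Set.Icc (x + 1) (x + n)).ncard} := by
  refine ⟨n, ?_⟩
  rintro c ⟨x, rfl⟩
  exact inter_Icc_ncard_le A x n

lemma exists_maxCount (A : Set ℤ) (n : ℕ) :
    ∃ x : ℤ, maxCount A n = (A ∩ Set.Icc (x + 1) (x + n)).ncard := by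
  have hne : {c : ℕ | ∃ x : ℤ, c = (A ∩ Set.Icc (x + 1) (x + n)).ncard}.Nonempty :=
    ⟨_, 0, rfl⟩
  exact Nat.sSup_mem hne (maxCount_bddAbove A n)

lemma le_maxCount (A : Set ℤ) (n : ℕ) (x : ℤ) :
    (A ∩ Set.Icc (x + 1) (x + n)).ncard ≤ maxCount A n :=
  le_csSup (maxCount_bddAbove A n) ⟨x, rfl⟩

lemma BD_le (A : Set ℤ) (n : ℕ+) : BD A ≤ (maxCount A (n : ℕ) : ℝ) / ((n : ℕ) : ℝ) := by
  refine ciInf_le ⟨0, ?_⟩ n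
  rintro r ⟨m, rfl⟩
  positivity

theorem diff_thick_of_bd_sum_gt_one (A B : Set ℤ) (h : BD A + BD B > 1) :
    Thick (A - B) := by
  intro k
  set δ : ℝ := BD A + BD B - 1 with hδdef
  have hδ : 0 < δ := by linarith
  obtain ⟨n0, hn0⟩ := exists_nat_gt ((k : ℝ) / δ)
  set n : ℕ+ := ⟨n0 + k + 1, by omega⟩ with hn
  have hnval : (n : ℕ) = n0 + k + 1 := rfl
  have hnk : (k : ℝ) < ((n : ℕ) : ℝ) * δ := by
    have h1 : (k : ℝ) < (n0 : ℝ) * δ := (div_lt_iff₀ hδ).mp hn0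
    have h2 : ((n0 : ℕ) : ℝ) ≤ ((n : ℕ) : ℝ) := by
      have : n0 ≤ (n : ℕ) := by omega
      exact_mod_cast this
    nlinarith
  obtain ⟨x, hx⟩ := exists_maxCount A (n : ℕ)
  obtain ⟨z, hz⟩ := exists_maxCount B (n : ℕ)
  have hnpos : (0 : ℝ) < ((n : ℕ) : ℝ) := by exact_mod_cast n.pos
  -- key counting inequality
  have hab : (n : ℕ) + k + 1 ≤ maxCount A (n : ℕ) + maxCount B (n : ℕ) := by
    have h1 := BD_le A n
    have h2 := BD_le B n
    have h3 : (1 : ℝ) + δ ≤ ((maxCount A (n : ℕ) : ℝ) + (maxCount B (n : ℕ) : ℝ)) / ((n : ℕ) : ℝ) := by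
      rw [add_div]; linarith
    have h4 : ((n : ℕ) : ℝ) + (k : ℝ) < (maxCount A (n : ℕ) : ℝ) + (maxCount B (n : ℕ) : ℝ) := by
      have h5 := (le_div_iff₀ hnpos).mp h3
      nlinarith
    have h6 : (n : ℕ) + k < maxCount A (n : ℕ) + maxCount B (n : ℕ) := by
      exact_mod_cast h4
    omega
  set C : Set ℤ := B ∩ Set.Icc (z + 1) (z + ((n : ℕ) : ℤ) - (k : ℤ)) with hC
  have hCfin : C.Finite := (Set.finite_Icc _ _).inter_of_right _
  have hCcard : maxCount B (n : ℕ) ≤ C.ncard + k := by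
    have hsub : B ∩ Set.Icc (z + 1) (z + ((n : ℕ) : ℤ)) ⊆
        C ∪ Set.Icc (z + ((n : ℕ) : ℤ) - (k : ℤ) + 1) (z + ((n : ℕ) : ℤ)) := by
      rintro t ⟨htB, ht1, ht2⟩
      by_cases hc : t ≤ z + ((n : ℕ) : ℤ) - (k : ℤ)
      · exact Or.inl ⟨htB, ht1, hc⟩
      · exact Or.inr ⟨by omega, ht2⟩
    calc maxCount B (n : ℕ) = (B ∩ Set.Icc (z + 1) (z + ((n : ℕ) : ℤ))).ncard := hz
      _ ≤ (C ∪ Set.Icc (z + ((n : ℕ) : ℤ) - (k : ℤ) + 1) (z + ((n : ℕ) : ℤ))).ncard :=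
          Set.ncard_le_ncard hsub (hCfin.union (Set.finite_Icc _ _))
      _ ≤ C.ncard + (Set.Icc (z + ((n : ℕ) : ℤ) - (k : ℤ) + 1) (z + ((n : ℕ) : ℤ))).ncard :=
          Set.ncard_union_le _ _
      _ ≤ C.ncard + k := by rw [ncard_Icc_int]; omega
  refine ⟨x - z, fun t ht => ?_⟩
  obtain ⟨ht1, ht2⟩ := ht
  set T : Set ℤ := (fun c => c + t) '' C with hT
  have hfin : (Set.Icc (x + 1) (x + ((n : ℕ) : ℤ))).Finite := Set.finite_Icc _ _
  have hTsub : T ⊆ Set.Icc (x + 1) (x + ((n : ℕ) : ℤ)) := by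
    rintro _ ⟨c, ⟨hcB, hc1, hc2⟩, rfl⟩
    simp only [Set.mem_Icc]
    omega
  have hTcard : T.ncard = C.ncard := Set.ncard_image_of_injective _ (add_left_injective t)
  set S : Set ℤ := A ∩ Set.Icc (x + 1) (x + ((n : ℕ) : ℤ)) with hS
  have hSsub : S ⊆ Set.Icc (x + 1) (x + ((n : ℕ) : ℤ)) := inter_subset_right
  have hIcc : (Set.Icc (x + 1) (x + ((n : ℕ) : ℤ))).ncard = (n : ℕ) := by
    rw [ncard_Icc_int]; omega
  have hSfin : S.Finite := hfin.inter_of_right _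
  have hTfin : T.Finite := hfin.subset hTsub
  have hunion : (S ∪ T).ncard ≤ (n : ℕ) := by
    rw [← hIcc]
    exact Set.ncard_le_ncard (union_subset hSsub hTsub) hfin
  have hie := Set.ncard_union_add_ncard_inter S T hSfin hTfin
  have hSval : S.ncard = maxCount A (n : ℕ) := hx.symm
  have key : (n : ℕ) < S.ncard + T.ncard := by
    rw [hSval, hTcard]; omega
  have hne : (S ∩ T).Nonempty := by
    rw [← Set.ncard_pos (hSfin.inter_of_left _)]
    rw [hnval] at hunion key
    omega
  obtain ⟨p, ⟨hpA, -⟩, c, hcC, hpc⟩ := hne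
  have hteq : t = p - c := by
    have hpc' : c + t = p := hpc
    omega
  rw [hteq]
  exact Set.sub_mem_sub hpA hcC.1
end

section
/- If A, B ⊆ ℕ have positive upper Banach density, then the sumset A + B is piecewise syndetic (Jin's theorem). -/
open Filter Set Pointwise

noncomputable def maxCountN (S : Set ℕ) (n : ℕ) : ℕ :=
  sSup {c : ℕ | ∃ x : ℕ, c = (S ∩ Set.Icc (x + 1) (x + n)).ncard}

noncomputable def BDN (S : Set ℕ) : ℝ :=
  ⨅ n : ℕ+, (maxCountN S (n : ℕ) : ℝ) / (n : ℕ)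

def ThickN (A : Set ℕ) : Prop :=
  ∀ k : ℕ, ∃ y : ℕ, Set.Icc (y + 1) (y + k) ⊆ A

def PiecewiseSyndeticN (A : Set ℕ) : Prop :=
  ∃ F : Finset ℕ, ThickN (A + (F : Set ℕ))

open scoped Classical in
noncomputable def fcnt (S : Set ℕ) (x n : ℕ) : ℕ :=
  ((Finset.Icc (x+1) (x+n)).filter (· ∈ S)).card

open scoped Classical
set_option maxHeartbeats 1000000

lemma ncard_window (S : Set ℕ) (x n : ℕ) :
    (S ∩ Set.Icc (x + 1) (x + n)).ncard = fcnt S x n := by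
  rw [fcnt]
  rw [← Set.ncard_coe_finset]
  congr 1
  ext m
  simp only [Finset.coe_filter, Finset.mem_Icc, Set.mem_inter_iff, Set.mem_Icc, Set.mem_setOf_eq]
  tauto

lemma fcnt_le (S : Set ℕ) (x n : ℕ) : fcnt S x n ≤ n := by
  have h := Finset.card_filter_le (Finset.Icc (x+1) (x+n)) (· ∈ S)
  simpa [fcnt, Nat.card_Icc] using h

lemma fcnt_mono_right (S : Set ℕ) (x : ℕ) {n m : ℕ} (h : n ≤ m) :
    fcnt S x n ≤ fcnt S x m := by
  apply Finset.card_le_card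
  apply Finset.filter_subset_filter
  exact Finset.Icc_subset_Icc le_rfl (by omega)

lemma fcnt_split (S : Set ℕ) (x a b : ℕ) :
    fcnt S x (a + b) ≤ fcnt S x a + fcnt S (x + a) b := by
  unfold fcnt
  rw [← Finset.card_union_of_disjoint]
  · apply Finset.card_le_card
    rw [← Finset.filter_union]
    apply Finset.filter_subset_filter
    intro m hm
    simp only [Finset.mem_union, Finset.mem_Icc] at *
    omega
  · apply Finset.disjoint_filter_filter
    rw [Finset.disjoint_left]
    intro m hm hm'
    simp only [Finset.mem_Icc] at *
    omega

lemma le_maxCountN (S : Set ℕ) (x n : ℕ) : fcnt S x n ≤ maxCountN S n := by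
  apply le_csSup
  · rw [bddAbove_def]
    exact ⟨n, by rintro c ⟨y, rfl⟩; rw [ncard_window]; exact fcnt_le S y n⟩
  · exact ⟨x, (ncard_window S x n).symm⟩

lemma maxCountN_exists (S : Set ℕ) (n : ℕ) : ∃ x, maxCountN S n = fcnt S x n := by
  have h : maxCountN S n ∈ {c : ℕ | ∃ x : ℕ, c = (S ∩ Set.Icc (x + 1) (x + n)).ncard} := by
    apply Nat.sSup_mem
    · exact ⟨_, 0, rfl⟩
    · exact ⟨n, by rintro c ⟨y, rfl⟩; rw [ncard_window]; exact fcnt_le S y n⟩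
  obtain ⟨x, hx⟩ := h
  exact ⟨x, by rw [hx, ncard_window]⟩

lemma maxCountN_le (S : Set ℕ) (n : ℕ) : maxCountN S n ≤ n := by
  obtain ⟨x, hx⟩ := maxCountN_exists S n
  rw [hx]; exact fcnt_le S x n

lemma BDN_mul_le (S : Set ℕ) (n : ℕ) (hn : 1 ≤ n) :
    BDN S * n ≤ (maxCountN S n : ℝ) := by
  have hb : BddBelow (Set.range fun n : ℕ+ => (maxCountN S (n : ℕ) : ℝ) / (n : ℕ)) := by
    refine ⟨0, ?_⟩
    rintro r ⟨m, rfl⟩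
    positivity
  have h := ciInf_le hb (⟨n, hn⟩ : ℕ+)
  rw [BDN] at *
  have hn' : (0:ℝ) < n := by exact_mod_cast hn
  calc BDN S * n ≤ ((maxCountN S n : ℝ)/n) * n := by
        apply mul_le_mul_of_nonneg_right _ hn'.le
        exact h
    _ = (maxCountN S n : ℝ) := by field_simp

lemma exists_window (S : Set ℕ) (n : ℕ) (hn : 1 ≤ n) :
    ∃ x, BDN S * n ≤ (fcnt S x n : ℝ) := by
  obtain ⟨x, hx⟩ := maxCountN_exists S n
  exact ⟨x, by rw [← hx]; exact BDN_mul_le S n hn⟩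

lemma BDN_nonneg (S : Set ℕ) : 0 ≤ BDN S := by
  apply le_ciInf
  intro m
  positivity

lemma BDN_le_one (S : Set ℕ) : BDN S ≤ 1 := by
  have h := BDN_mul_le S 1 le_rfl
  have h2 := maxCountN_le S 1
  have : (maxCountN S 1 : ℝ) ≤ 1 := by exact_mod_cast h2
  simpa using h.trans this

lemma le_BDN (S : Set ℕ) (σ : ℝ) (h : ∀ n : ℕ, 1 ≤ n → σ * n ≤ (maxCountN S n : ℝ)) :
    σ ≤ BDN S := by
  apply le_ciInf
  intro m
  rw [le_div_iff₀ (by exact_mod_cast m.pos : (0:ℝ) < (m:ℕ))]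
  exact h m m.2

lemma upper_reg (S : Set ℕ) {ε : ℝ} (hε : 0 < ε) :
    ∃ l, 1 ≤ l ∧ ∀ x, (fcnt S x l : ℝ) ≤ (BDN S + ε) * l := by
  have h : BDN S < BDN S + ε := by linarith
  obtain ⟨m, hm⟩ := exists_lt_of_ciInf_lt (by rw [← BDN]; exact h)
  refine ⟨m, m.2, fun x => ?_⟩
  have h1 : (fcnt S (x) (m:ℕ) : ℝ) ≤ (maxCountN S m : ℝ) := by
    exact_mod_cast le_maxCountN S x m
  have hm' : (0:ℝ) < (m:ℕ) := by exact_mod_cast m.pos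
  rw [div_lt_iff₀ hm'] at hm
  linarith

lemma fcnt_le_blocks (S : Set ℕ) (m : ℕ) :
    ∀ q x n, n ≤ (q+1) * m → fcnt S x n ≤ (q+1) * maxCountN S m := by
  intro q
  induction q with
  | zero =>
    intro x n hn
    rw [Nat.zero_add, one_mul] at hn ⊢
    exact (fcnt_mono_right S x hn).trans (le_maxCountN S x m)
  | succ q ih =>
    intro x n hn
    by_cases h : n ≤ (q+1) * m
    · exact (ih x n h).trans (Nat.mul_le_mul_right _ (by omega))
    · have hmn : m ≤ n := by
        have h1 : m ≤ (q+1) * m := Nat.le_mul_of_pos_left m (Nat.succ_pos q)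
        omega
      obtain ⟨b, rfl⟩ : ∃ b, n = m + b := ⟨n - m, by omega⟩
      have hb : b ≤ (q+1) * m := by
        have e : (q+1+1) * m = m + (q+1) * m := by ring
        omega
      calc fcnt S x (m + b) ≤ fcnt S x m + fcnt S (x + m) b := fcnt_split S x m b
        _ ≤ maxCountN S m + (q+1) * maxCountN S m :=
            Nat.add_le_add (le_maxCountN S x m) (ih (x+m) b hb)
        _ = (q+1+1) * maxCountN S m := by ring

lemma BDN_of_windows (S : Set ℕ) (ρ : ℝ) (hρ : 0 ≤ ρ)
    (h : ∀ N : ℕ, ∃ n x, N ≤ n ∧ ρ * n ≤ (fcnt S x n : ℝ)) : ρ ≤ BDN S := by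
  apply le_BDN
  intro m hm
  by_contra hcon
  push_neg at hcon
  set M := (maxCountN S m : ℝ) with hM
  have hM0 : 0 ≤ M := by positivity
  have hD : 0 < ρ * m - M := by linarith
  set D := ρ * m - M with hDdef
  have hmR : (0:ℝ) < m := by exact_mod_cast hm
  obtain ⟨N, hN⟩ := exists_nat_ge ((m : ℝ) * (M / D) + m + 1)
  obtain ⟨n, x, hn1, hn2⟩ := h N
  set q := n / m with hq
  have hmod : m * q + n % m = n := by rw [hq]; exact Nat.div_add_mod n m
  have hmodlt : n % m < m := Nat.mod_lt n (by omega)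
  have hqn : n ≤ (q + 1) * m := by
    have e : (q + 1) * m = m * q + m := by ring
    omega
  have hqn' : q * m ≤ n := by
    have e : q * m = m * q := by ring
    omega
  have hcount := fcnt_le_blocks S m q x n hqn
  have hcount' : (fcnt S x n : ℝ) ≤ ((q:ℝ)+1) * M := by
    rw [hM]
    push_cast
    exact_mod_cast hcount
  -- q * D ≤ M
  have h1 : ρ * ((q:ℝ) * m) ≤ ((q:ℝ)+1) * M := by
    refine le_trans ?_ (hn2.trans hcount')
    apply mul_le_mul_of_nonneg_left _ hρ
    exact_mod_cast hqn'
  have hc1 : (q:ℝ) ≤ M / D := by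
    rw [le_div_iff₀ hD]
    nlinarith [h1]
  -- q > M / D
  have hnq : ((n:ℝ)) ≤ ((q:ℝ)+1) * m := by exact_mod_cast hqn
  have hNn : ((N:ℝ)) ≤ (n:ℝ) := by exact_mod_cast hn1
  have hc2 : (m:ℝ) * (M/D) < (q:ℝ) * m := by nlinarith
  have hc3 : M/D < (q:ℝ) := by
    have := (mul_lt_mul_iff_left₀ hmR).mp (by linarith [hc2] : (M/D) * m < (q:ℝ) * m)
    exact this
  linarith

lemma exists_window_ge (S : Set ℕ) (w n : ℕ) (hn : 1 ≤ n) :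
    ∃ x, w ≤ x ∧ BDN S * n - w ≤ (fcnt S x n : ℝ) := by
  obtain ⟨x, hx⟩ := exists_window S (w + n) (by omega)
  refine ⟨x + w, Nat.le_add_left w x, ?_⟩
  have hsplit := fcnt_split S x w n
  have h1 : fcnt S x (w + n) ≤ w + fcnt S (x + w) n :=
    hsplit.trans (Nat.add_le_add_right (fcnt_le S x w) _)
  have h2 : BDN S * n ≤ BDN S * (w + n) := by
    have h4 : (0:ℝ) ≤ BDN S * w := mul_nonneg (BDN_nonneg S) (by positivity)
    push_cast
    linarith
  have h3 : (fcnt S x (w+n) : ℝ) ≤ w + fcnt S (x+w) n := by exact_mod_cast h1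
  push_cast at hx h2 h3 ⊢
  linarith

lemma union_shift_eq (X : Set ℕ) (g : ℕ) :
    X + ({0, g} : Set ℕ) = X ∪ (fun e => e + g) '' X := by
  ext a
  simp only [Set.mem_add, Set.mem_insert_iff, Set.mem_singleton_iff, Set.mem_union,
    Set.mem_image]
  constructor
  · rintro ⟨x, hx, y, (rfl | rfl), rfl⟩
    · left; simpa using hx
    · right; exact ⟨x, hx, rfl⟩
  · rintro (ha | ⟨x, hx, rfl⟩)
    · exact ⟨a, ha, 0, Or.inl rfl, by ring⟩
    · exact ⟨x, hx, g, Or.inr rfl, rfl⟩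

lemma increment (E : Set ℕ) (h0 : 0 < BDN E) (h1 : BDN E < 1) :
    ∃ g : ℕ, BDN E + BDN E * (1 - BDN E) / 2 ≤ BDN (E ∪ (fun e => e + g) '' E) := by
  classical
  set δ := BDN E with hδ
  set ε := δ * (1 - δ) / 8 with hε
  set Δ := δ * (1 - δ) / 2 with hΔ
  have hprod : 0 < δ * (1 - δ) := mul_pos h0 (by linarith)
  have hε0 : 0 < ε := by rw [hε]; linarith
  have hΔ0 : 0 < Δ := by rw [hΔ]; linarith
  have hεle : 0 < 1 - δ - ε := by rw [hε]; nlinarith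
  obtain ⟨l, hl1, hreg⟩ := upper_reg E hε0
  have hreg2 : ∀ x, (fcnt E x (2*l) : ℝ) ≤ (δ + ε) * (2*l) := by
    intro x
    have hs : fcnt E x (2*l) ≤ fcnt E x l + fcnt E (x+l) l := by
      have h := fcnt_split E x l l
      have e2 : 2*l = l + l := by ring
      rw [e2]; exact h
    have hsR : (fcnt E x (2*l) : ℝ) ≤ (fcnt E x l : ℝ) + (fcnt E (x+l) l : ℝ) := by
      exact_mod_cast hs
    have r1 := hreg x
    have r2 := hreg (x+l)
    push_cast at hsR r1 r2 ⊢
    nlinarith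
  obtain ⟨N₁, hN₁⟩ := exists_nat_ge ((16*l : ℝ) / (δ * (1-δ)))
  have h16 : ∀ n : ℕ, N₁ ≤ n → (16*l : ℝ) ≤ δ * (1-δ) * n := by
    intro n hn
    have hnR : (N₁:ℝ) ≤ n := by exact_mod_cast hn
    have hpos : (0:ℝ) < δ * (1-δ) := by nlinarith
    rw [div_le_iff₀ hpos] at hN₁
    nlinarith
  set N₀ := max N₁ (2*l+1) with hN₀
  have main : ∀ n, N₀ ≤ n → ∃ g ∈ Finset.Icc 1 (2*l), ∃ x,
      (δ + Δ) * n ≤ (fcnt (E ∪ (fun e => e + g) '' E) x n : ℝ) := by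
    intro n hn
    have hn2l : 2*l + 1 ≤ n := le_trans (le_max_right _ _) hn
    have hn16 := h16 n (le_trans (le_max_left _ _) hn)
    obtain ⟨x, hx2l, hxcnt⟩ := exists_window_ge E (2*l) n (by omega)
    set W := Finset.Icc (x+1) (x+n) with hW
    set H := W.filter (fun h => h ∉ E) with hH
    set EW := (Finset.Icc (x+1) (x + (n - 2*l))).filter (fun e => e ∈ E) with hEW
    have hEWcard : fcnt E x n ≤ EW.card + 2*l := by
      have hs : fcnt E x n ≤ fcnt E x (n - 2*l) + fcnt E (x + (n - 2*l)) (2*l) := by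
        have e2 : n = (n - 2*l) + 2*l := by omega
        nth_rewrite 1 [e2]
        exact fcnt_split E x (n - 2*l) (2*l)
      have heq : fcnt E x (n - 2*l) = EW.card := rfl
      have hle := fcnt_le E (x + (n - 2*l)) (2*l)
      omega
    set P := (Finset.Icc 1 (2*l)).sigma (fun g => H.filter (fun h => h - g ∈ E)) with hP
    set Q := EW.sigma (fun e => H.filter (fun h => h ∈ Finset.Icc (e+1) (e+2*l))) with hQ
    have hQP : Q.card ≤ P.card := by
      apply Finset.card_le_card_of_injOn (fun p => ⟨p.2 - p.1, p.2⟩)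
      · rintro ⟨e, h⟩ hp
        simp only [Finset.mem_coe, hQ, Finset.mem_sigma, Finset.mem_filter, Finset.mem_Icc, hEW] at hp
        obtain ⟨⟨⟨he1, he2⟩, heE⟩, hhH, hh1, hh2⟩ := hp
        simp only [Finset.mem_coe, hP, Finset.mem_sigma, Finset.mem_filter, Finset.mem_Icc]
        refine ⟨⟨by omega, by omega⟩, hhH, ?_⟩
        have he : h - (h - e) = e := by omega
        rw [he]; exact heE
      · intro p hp p' hp' heq
        rw [Finset.mem_coe, hQ, Finset.mem_sigma] at hp hp'
        have h1p : p.fst + 1 ≤ p.snd := by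
          have h2 := hp.2
          rw [Finset.mem_filter, Finset.mem_Icc] at h2
          exact h2.2.1
        have h1p' : p'.fst + 1 ≤ p'.snd := by
          have h2 := hp'.2
          rw [Finset.mem_filter, Finset.mem_Icc] at h2
          exact h2.2.1
        have hsnd : p.snd = p'.snd := congrArg Sigma.snd heq
        have hfst : p.snd - p.fst = p'.snd - p'.fst := congrArg Sigma.fst heq
        exact Sigma.ext (by omega) (heq_of_eq (by omega))
    have hQcard : ∀ e ∈ EW, (2*l : ℝ) * (1 - δ - ε) ≤
        ((H.filter (fun h => h ∈ Finset.Icc (e+1) (e+2*l))).card : ℝ) := by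
      intro e he
      simp only [hEW, Finset.mem_filter, Finset.mem_Icc] at he
      obtain ⟨⟨he1, he2⟩, heE⟩ := he
      have hsub : (Finset.Icc (e+1) (e+2*l)).filter (fun h => h ∉ E) ⊆
          H.filter (fun h => h ∈ Finset.Icc (e+1) (e+2*l)) := by
        intro h hh
        simp only [Finset.mem_filter, Finset.mem_Icc] at hh
        simp only [Finset.mem_filter, Finset.mem_Icc, hH, hW]
        exact ⟨⟨⟨by omega, by omega⟩, hh.2⟩, hh.1.1, hh.1.2⟩
      have hcards : ((Finset.Icc (e+1) (e+2*l)).filter (fun h => h ∈ E)).card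
          + ((Finset.Icc (e+1) (e+2*l)).filter (fun h => h ∉ E)).card
          = (Finset.Icc (e+1) (e+2*l)).card :=
        Finset.card_filter_add_card_filter_not _
      have hicc : (Finset.Icc (e+1) (e+2*l)).card = 2*l := by
        rw [Nat.card_Icc]; omega
      have hfc : ((Finset.Icc (e+1) (e+2*l)).filter (fun h => h ∈ E)).card = fcnt E e (2*l) :=
        rfl
      have hmono := Finset.card_le_card hsub
      have hcnt := hreg2 e
      have hge : (2*l : ℕ) - fcnt E e (2*l) ≤
          (H.filter (fun h => h ∈ Finset.Icc (e+1) (e+2*l))).card := by omega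
      have hle2l := fcnt_le E e (2*l)
      have hcast : ((2*l:ℕ):ℝ) - (fcnt E e (2*l) : ℝ) ≤
          ((H.filter (fun h => h ∈ Finset.Icc (e+1) (e+2*l))).card : ℝ) := by
        have h' : (((2*l : ℕ) - fcnt E e (2*l) : ℕ) : ℝ) ≤ _ := Nat.cast_le.mpr hge
        rwa [Nat.cast_sub hle2l] at h'
      push_cast at hcast ⊢
      nlinarith
    have hQlow : (EW.card : ℝ) * ((2*l:ℝ) * (1 - δ - ε)) ≤ (Q.card : ℝ) := by
      have hcs : Q.card = ∑ e ∈ EW, (H.filter (fun h => h ∈ Finset.Icc (e+1) (e+2*l))).card :=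
        Finset.card_sigma _ _
      have : (Q.card : ℝ) = ∑ e ∈ EW,
          ((H.filter (fun h => h ∈ Finset.Icc (e+1) (e+2*l))).card : ℝ) := by
        rw [hcs]; push_cast; ring
      rw [this]
      calc (EW.card : ℝ) * ((2*l:ℝ) * (1 - δ - ε))
          = ∑ _e ∈ EW, ((2*l:ℝ) * (1 - δ - ε)) := by
            rw [Finset.sum_const, nsmul_eq_mul]
        _ ≤ _ := Finset.sum_le_sum hQcard
    have hEWlow : (δ * n - 4*l : ℝ) ≤ (EW.card : ℝ) := by
      have h1' : (fcnt E x n : ℝ) ≤ (EW.card : ℝ) + 2*l := by exact_mod_cast hEWcard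
      push_cast at hxcnt
      linarith
    have hPlow : (δ * n - 4*l) * ((2*l:ℝ) * (1 - δ - ε)) ≤ (P.card : ℝ) := by
      have hf : (0:ℝ) ≤ (2*l:ℝ) * (1 - δ - ε) := by positivity
      have := mul_le_mul_of_nonneg_right hEWlow hf
      have hQPR : (Q.card : ℝ) ≤ (P.card : ℝ) := by exact_mod_cast hQP
      linarith
    have hpig : ∃ g ∈ Finset.Icc 1 (2*l),
        (δ * n - 4*l) * (1 - δ - ε) ≤ ((H.filter (fun h => h - g ∈ E)).card : ℝ) := by
      by_contra hc
      push_neg at hc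
      have hcs : P.card = ∑ g ∈ Finset.Icc 1 (2*l), (H.filter (fun h => h - g ∈ E)).card :=
        Finset.card_sigma _ _
      have hPR : (P.card : ℝ) = ∑ g ∈ Finset.Icc 1 (2*l),
          ((H.filter (fun h => h - g ∈ E)).card : ℝ) := by
        rw [hcs]; push_cast; ring
      have hne : (Finset.Icc 1 (2*l)).Nonempty := ⟨1, by simp; omega⟩
      have hlt : ∑ g ∈ Finset.Icc 1 (2*l), ((H.filter (fun h => h - g ∈ E)).card : ℝ)
          < ∑ _g ∈ Finset.Icc 1 (2*l), (δ * n - 4*l) * (1 - δ - ε) :=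
        Finset.sum_lt_sum_of_nonempty hne hc
      have hccast : (((Finset.Icc 1 (2*l)).card : ℕ) : ℝ) = 2*(l:ℝ) := by
        rw [Nat.card_Icc]; push_cast; ring
      rw [Finset.sum_const, nsmul_eq_mul, hccast] at hlt
      nlinarith [hPlow, hPR]
    obtain ⟨g, hg, hgcard⟩ := hpig
    refine ⟨g, hg, x, ?_⟩
    simp only [Finset.mem_Icc] at hg
    -- count E' in W
    have hdisj : Disjoint (W.filter (fun h => h ∈ E)) (H.filter (fun h => h - g ∈ E)) := by
      rw [Finset.disjoint_left]
      intro a ha hb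
      simp only [Finset.mem_filter, hH] at ha hb
      exact hb.1.2 ha.2
    have hcard' : (W.filter (fun h => h ∈ E)).card + (H.filter (fun h => h - g ∈ E)).card
        ≤ fcnt (E ∪ (fun e => e + g) '' E) x n := by
      rw [← Finset.card_union_of_disjoint hdisj]
      unfold fcnt
      apply Finset.card_le_card
      intro m hm
      simp only [Finset.mem_union, Finset.mem_filter, hH, hW, Finset.mem_Icc] at hm
      simp only [Finset.mem_filter, Finset.mem_Icc]
      rcases hm with ⟨hmem, hE⟩ | ⟨⟨hmem, hnE⟩, hgE⟩
      · exact ⟨hmem, Or.inl hE⟩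
      · refine ⟨hmem, Or.inr ⟨m - g, hgE, ?_⟩⟩
        show m - g + g = m
        omega
    have hfcnteq : (W.filter (fun h => h ∈ E)).card = fcnt E x n := rfl
    have hcR : (fcnt E x n : ℝ) + ((H.filter (fun h => h - g ∈ E)).card : ℝ)
        ≤ (fcnt (E ∪ (fun e => e + g) '' E) x n : ℝ) := by
      rw [← hfcnteq]; exact_mod_cast hcard'
    -- final arithmetic
    have hδ1 : δ ≤ 1 := le_of_lt h1
    have hlR : (1:ℝ) ≤ l := by exact_mod_cast hl1
    have nn : (0:ℝ) ≤ n := Nat.cast_nonneg n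
    have h1δ : (0:ℝ) ≤ 1 - δ := by linarith
    push_cast at hxcnt
    rw [hε] at hgcard hεle
    have key : (δ + Δ)*(n:ℝ) ≤ (δ*(n:ℝ) - 2*(l:ℝ)) + (δ*(n:ℝ) - 4*(l:ℝ))*(1 - δ - δ*(1-δ)/8) := by
      rw [hΔ]
      have t1 : 0 ≤ δ*(1-δ)^2*(n:ℝ) :=
        mul_nonneg (mul_nonneg h0.le (by nlinarith)) nn
      have t2 : 0 ≤ (l:ℝ)*δ := mul_nonneg (by linarith) h0.le
      have t3 : 0 ≤ (l:ℝ)*(δ*(1-δ)/8) := mul_nonneg (by linarith) (by linarith)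
      nlinarith [hn16, t1, t2, t3]
    have hgcard' : (δ*(n:ℝ) - 4*(l:ℝ))*(1 - δ - δ*(1-δ)/8) ≤
        ((H.filter (fun h => h - g ∈ E)).card : ℝ) := by
      convert hgcard using 2 <;> push_cast <;> ring
    linarith [hgcard', hcR, hxcnt, key]
  -- pigeonhole in n: one g works for arbitrarily large n
  by_contra hcon
  push_neg at hcon
  have hcon' : ∀ g : ℕ, ∃ N : ℕ, ∀ n x, N ≤ n → (fcnt (E ∪ (fun e => e + g) '' E) x n : ℝ)
      < (δ + Δ) * n := by
    intro g
    by_contra hg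
    push_neg at hg
    have : δ + Δ ≤ BDN (E ∪ (fun e => e + g) '' E) := by
      apply BDN_of_windows _ _ (by linarith)
      intro N
      obtain ⟨n, x, hn, hx⟩ := hg N
      exact ⟨n, x, hn, hx⟩
    exact absurd this (not_le.mpr (hcon g))
  choose Nf hNf using hcon'
  set nbig := max N₀ ((Finset.Icc 1 (2*l)).sup Nf) with hnbig
  obtain ⟨g, hg, x, hx⟩ := main nbig (le_max_left _ _)
  have hNfg : Nf g ≤ nbig := by
    refine le_trans (Finset.le_sup hg) (le_max_right _ _)
  exact absurd hx (by push_neg; exact hNf g nbig x hNfg)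

lemma pump (B : Set ℕ) (hB : 0 < BDN B) {τ : ℝ} (hτ : τ < 1) :
    ∃ F : Finset ℕ, τ ≤ BDN (B + (F : Set ℕ)) := by
  classical
  set β := BDN B with hβ
  set c := β * (1 - τ) / 2 with hc
  have hc0 : 0 < c := by rw [hc]; nlinarith
  have claim : ∀ k : ℕ, ∃ F : Finset ℕ, min τ (β + k * c) ≤ BDN (B + (F : Set ℕ)) := by
    intro k
    induction k with
    | zero =>
      refine ⟨{0}, ?_⟩
      have hid : B + (({0} : Finset ℕ) : Set ℕ) = B := by
        ext a
        simp [Set.mem_add]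
      rw [hid]
      calc min τ (β + (0:ℕ) * c) ≤ β + (0:ℕ) * c := min_le_right _ _
        _ = BDN B := by rw [hβ]; push_cast; ring
    | succ k ih =>
      obtain ⟨F, hF⟩ := ih
      by_cases hcase : τ ≤ BDN (B + (F : Set ℕ))
      · exact ⟨F, le_trans (min_le_left _ _) hcase⟩
      · push_neg at hcase
        have hmin : β + k * c ≤ BDN (B + (F : Set ℕ)) := by
          rcases min_choice τ (β + k * c) with h | h
          · rw [h] at hF; linarith
          · rw [h] at hF; exact hF
        have hkc : (0:ℝ) ≤ (k:ℝ) * c := mul_nonneg (Nat.cast_nonneg k) hc0.le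
        have hβδ : β ≤ BDN (B + (F : Set ℕ)) := by linarith
        have hδ0 : 0 < BDN (B + (F : Set ℕ)) := by linarith
        have hδ1 : BDN (B + (F : Set ℕ)) < 1 := lt_trans hcase hτ
        obtain ⟨g, hg⟩ := increment _ hδ0 hδ1
        refine ⟨F + {0, g}, ?_⟩
        have hset : B + ((F + {0, g} : Finset ℕ) : Set ℕ)
            = (B + (F : Set ℕ)) ∪ (fun e => e + g) '' (B + (F : Set ℕ)) := by
          rw [Finset.coe_add, ← add_assoc, ← union_shift_eq]
          congr 1
          simp
        rw [hset]
        have h1δ : 0 < 1 - BDN (B + (F : Set ℕ)) := by linarith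
        have key2 : β * (1 - τ) ≤ BDN (B + (F : Set ℕ)) * (1 - BDN (B + (F : Set ℕ))) := by
          nlinarith [mul_nonneg (sub_nonneg.mpr hβδ) h1δ.le, mul_pos hB (sub_pos.mpr hcase)]
        calc min τ (β + (k+1 : ℕ) * c) ≤ β + (k+1 : ℕ) * c := min_le_right _ _
          _ = (β + k * c) + c := by push_cast; ring
          _ ≤ BDN (B + (F : Set ℕ)) + c := by linarith
          _ ≤ BDN (B + (F : Set ℕ))
              + BDN (B + (F : Set ℕ)) * (1 - BDN (B + (F : Set ℕ))) / 2 := by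
                rw [hc]; linarith
          _ ≤ _ := hg
  obtain ⟨kq, hk⟩ := exists_nat_ge ((τ - β) / c)
  obtain ⟨F, hF⟩ := claim kq
  refine ⟨F, le_trans ?_ hF⟩
  rw [div_le_iff₀ hc0] at hk
  exact le_min le_rfl (by linarith)

lemma thick_add (A E : Set ℕ) (h : 1 < BDN A + BDN E) : ThickN (A + E) := by
  classical
  intro k
  set a := BDN A with ha
  set e := BDN E with he
  have hsum : 0 < a + e - 1 := by linarith
  obtain ⟨n0, hn0⟩ := exists_nat_ge ((k + 2 : ℝ) / (a + e - 1))
  set n := n0 + 1 with hn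
  have hkn : (k + 2 : ℝ) ≤ (a + e - 1) * n := by
    rw [div_le_iff₀ hsum] at hn0
    have : (n0 : ℝ) ≤ n := by rw [hn]; push_cast; linarith
    nlinarith
  obtain ⟨x, hx⟩ := exists_window A n (by omega)
  obtain ⟨y, hy⟩ := exists_window E n (by omega)
  have ha1 : a ≤ 1 := by rw [ha]; exact BDN_le_one A
  have he1 : e ≤ 1 := by rw [he]; exact BDN_le_one E
  have hknN : k + 2 ≤ n := by
    have h2 : ((k:ℝ)+2) ≤ (n:ℝ) := by nlinarith [(Nat.cast_nonneg n : (0:ℝ) ≤ (n:ℝ)), hkn]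
    exact_mod_cast h2
  refine ⟨x + y + n, ?_⟩
  intro t ht
  rw [Set.mem_Icc] at ht
  obtain ⟨ht1, ht2⟩ := ht
  set j := t - (x + y + n) with hj
  have hj1 : 1 ≤ j := by omega
  have hjk : j ≤ k := by omega
  have htj : t = x + y + n + j := by omega
  set P := (Finset.Icc (x+1) (x+n)).filter (fun m => m ∈ A) with hP
  set Q := (Finset.Icc (y+1) (y+n)).filter (fun m => m ∈ E) with hQ
  set Q2 := Q.image (fun q => t - q) with hQ2
  set O := Finset.Icc (x+j) (x+n) with hO
  have hPcard : P.card = fcnt A x n := rfl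
  have hQcard : Q.card = fcnt E y n := rfl
  have hyt : y + n ≤ t := by omega
  have hQ2card : Q2.card = Q.card := by
    apply Finset.card_image_of_injOn
    intro q hq q' hq' heq
    simp only [hQ, Finset.mem_coe, Finset.mem_filter, Finset.mem_Icc] at hq hq'
    have heq' : t - q = t - q' := heq
    omega
  -- P.card ≤ (P ∩ O).card + (j-1)
  have hPO : P.card ≤ (P ∩ O).card + (j - 1) := by
    have hsub : P ⊆ (P ∩ O) ∪ Finset.Icc (x+1) (x+j-1) := by
      intro m hm
      have hm' := hm
      simp only [hP, Finset.mem_filter, Finset.mem_Icc] at hm'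
      rw [Finset.mem_union, Finset.mem_inter, hO, Finset.mem_Icc, Finset.mem_Icc]
      by_cases hc' : x + j ≤ m
      · exact Or.inl ⟨hm, hc', hm'.1.2⟩
      · exact Or.inr ⟨hm'.1.1, by omega⟩
    calc P.card ≤ ((P ∩ O) ∪ Finset.Icc (x+1) (x+j-1)).card := Finset.card_le_card hsub
      _ ≤ (P ∩ O).card + (Finset.Icc (x+1) (x+j-1)).card := Finset.card_union_le _ _
      _ ≤ (P ∩ O).card + (j - 1) := by
          have : (Finset.Icc (x+1) (x+j-1)).card = j - 1 := by rw [Nat.card_Icc]; omega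
          omega
  have hQ2O : Q2.card ≤ (Q2 ∩ O).card + (j - 1) := by
    have hsub : Q2 ⊆ (Q2 ∩ O) ∪ Finset.Icc (x+n+1) (x+n+j-1) := by
      intro m hm
      have hm' := hm
      simp only [hQ2, Finset.mem_image, hQ, Finset.mem_filter, Finset.mem_Icc] at hm'
      obtain ⟨q, ⟨⟨hq1, hq2⟩, hqE⟩, rfl⟩ := hm'
      rw [Finset.mem_union, Finset.mem_inter, hO, Finset.mem_Icc, Finset.mem_Icc]
      by_cases hc' : t - q ≤ x + n
      · exact Or.inl ⟨hm, by omega, hc'⟩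
      · exact Or.inr ⟨by omega, by omega⟩
    calc Q2.card ≤ ((Q2 ∩ O) ∪ Finset.Icc (x+n+1) (x+n+j-1)).card := Finset.card_le_card hsub
      _ ≤ (Q2 ∩ O).card + (Finset.Icc (x+n+1) (x+n+j-1)).card := Finset.card_union_le _ _
      _ ≤ (Q2 ∩ O).card + (j - 1) := by
          have : (Finset.Icc (x+n+1) (x+n+j-1)).card = j - 1 := by rw [Nat.card_Icc]; omega
          omega
  have hOcard : O.card = n + 1 - j := by rw [hO, Nat.card_Icc]; omega
  have huni : ((P ∩ O) ∪ (Q2 ∩ O)).card ≤ n + 1 - j := by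
    rw [← hOcard]
    apply Finset.card_le_card
    intro m hm
    rw [Finset.mem_union, Finset.mem_inter, Finset.mem_inter] at hm
    tauto
  have hform := Finset.card_union_add_card_inter (P ∩ O) (Q2 ∩ O)
  -- real arithmetic: intersection nonempty
  have hintR : (0:ℝ) < (((P ∩ O) ∩ (Q2 ∩ O)).card : ℝ) := by
    have c1 : (a * n : ℝ) - (j - 1) ≤ ((P ∩ O).card : ℝ) := by
      have h1 : (P.card : ℝ) ≤ ((P ∩ O).card : ℝ) + (j - 1 : ℕ) := by exact_mod_cast hPO
      have h2 : (a * n : ℝ) ≤ (P.card : ℝ) := by rw [hPcard]; exact hx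
      have h3 : ((j - 1 : ℕ) : ℝ) = (j : ℝ) - 1 := by
        have : (1:ℕ) ≤ j := hj1
        push_cast [Nat.cast_sub this]
        ring
      rw [h3] at h1
      linarith
    have c2 : (e * n : ℝ) - (j - 1) ≤ ((Q2 ∩ O).card : ℝ) := by
      have h1 : (Q2.card : ℝ) ≤ ((Q2 ∩ O).card : ℝ) + (j - 1 : ℕ) := by exact_mod_cast hQ2O
      have h2 : (e * n : ℝ) ≤ (Q2.card : ℝ) := by
        rw [hQ2card, hQcard]; exact hy
      have h3 : ((j - 1 : ℕ) : ℝ) = (j : ℝ) - 1 := by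
        have : (1:ℕ) ≤ j := hj1
        push_cast [Nat.cast_sub this]
        ring
      rw [h3] at h1
      linarith
    have c3 : ((P ∩ O) ∪ (Q2 ∩ O)).card + ((P ∩ O) ∩ (Q2 ∩ O)).card
        = (P ∩ O).card + (Q2 ∩ O).card := hform
    have c4 : (((P ∩ O) ∪ (Q2 ∩ O)).card : ℝ) ≤ (n:ℝ) + 1 - j := by
      have hjn : j ≤ n + 1 := by omega
      have := huni
      have hcast : ((n + 1 - j : ℕ) : ℝ) = (n:ℝ) + 1 - j := by
        push_cast [Nat.cast_sub hjn]
        ring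
      rw [← hcast]
      exact_mod_cast this
    have c5 : (((P ∩ O) ∪ (Q2 ∩ O)).card : ℝ) + (((P ∩ O) ∩ (Q2 ∩ O)).card : ℝ)
        = ((P ∩ O).card : ℝ) + ((Q2 ∩ O).card : ℝ) := by exact_mod_cast c3
    have hjR : (j : ℝ) ≤ k := by exact_mod_cast hjk
    linarith
  have hint : ((P ∩ O) ∩ (Q2 ∩ O)).Nonempty := by
    rw [← Finset.card_pos]
    exact_mod_cast hintR
  obtain ⟨z, hz⟩ := hint
  rw [Finset.mem_inter, Finset.mem_inter, Finset.mem_inter] at hz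
  obtain ⟨⟨hzP, _⟩, hzQ2, _⟩ := hz
  rw [hP, Finset.mem_filter] at hzP
  rw [hQ2, Finset.mem_image] at hzQ2
  obtain ⟨q, hq, hzq⟩ := hzQ2
  rw [hQ, Finset.mem_filter, Finset.mem_Icc] at hq
  rw [Set.mem_add]
  exact ⟨z, hzP.2, q, hq.2, by omega⟩


theorem jin (A B : Set ℕ) (hA : 0 < BDN A) (hB : 0 < BDN B) :
    PiecewiseSyndeticN (A + B) := by
  have hA1 := BDN_le_one A
  obtain ⟨F, hF⟩ := pump B hB (τ := 1 - BDN A / 2) (by linarith)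
  refine ⟨F, ?_⟩
  have hthick : ThickN (A + (B + (F : Set ℕ))) := by
    apply thick_add
    linarith
  rw [add_assoc]
  exact hthick
end
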